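/- Let (X(t))_{t≥r} be a Markov chain with X(t+1) = X(t)+1 with probability (2X(t)−1)/(2t+1) and X(t+1) = X(t) otherwise, X(r) = 1. Set Y(t) = X(t) − 1/2. Then for every positive integer ℓ, the process Y(t)(Y(t)+1)···(Y(t)+ℓ−1) / ∏_{j=0}^{ℓ−1}(2(t+j)+1), t ≥ r, is a martingale. -/

import Mathlib

open MeasureTheory Finset

private lemma key_id (y c : ℝ) (ℓ : ℕ) :
    y * ∏ j ∈ Finset.range ℓ, (y + c + c * j) =
      (y + c * ℓ) * ∏ j ∈ Finset.range ℓ, (y + c * j) := by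
  induction ℓ with
  | zero => simp
  | succ n ih =>
    rw [Finset.prod_range_succ, Finset.prod_range_succ]
    push_cast
    push_cast at ih
    linear_combination (y + c + c * n) * ih

private lemma sm_prod {Ω : Type*} {m : MeasurableSpace Ω} {f : Ω → ℝ}
    (hf : StronglyMeasurable[m] f) (ℓ : ℕ) (a : ℝ) :
    StronglyMeasurable[m] (fun ω => ∏ j ∈ Finset.range ℓ, (f ω + a + (j : ℝ))) :=
  Finset.stronglyMeasurable_fun_prod _ fun j _ =>
    (hf.add stronglyMeasurable_const).add stronglyMeasurable_const

private lemma int_prod {Ω : Type*} {m0 : MeasurableSpace Ω} {μ : Measure Ω}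
    [IsProbabilityMeasure μ] {f : Ω → ℝ} (hm : AEStronglyMeasurable f μ) {B : ℝ}
    (hB : ∀ᵐ ω ∂μ, |f ω| ≤ B) (ℓ : ℕ) {a : ℝ} (ha : |a| ≤ 1) :
    Integrable (fun ω => ∏ j ∈ Finset.range ℓ, (f ω + a + (j : ℝ))) μ := by
  refine Integrable.mono' (integrable_const (∏ j ∈ Finset.range ℓ, (B + 1 + (j : ℝ))))
    (Finset.aestronglyMeasurable_fun_prod _ fun j _ =>
      (hm.add aestronglyMeasurable_const).add aestronglyMeasurable_const) ?_
  filter_upwards [hB] with ω hω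
  rw [Real.norm_eq_abs, Finset.abs_prod]
  refine Finset.prod_le_prod (fun j _ => abs_nonneg _) fun j _ => ?_
  have hj : (0 : ℝ) ≤ j := Nat.cast_nonneg j
  have h1 := abs_le.mp hω
  have h2 := abs_le.mp ha
  rw [abs_le]
  constructor <;> linarith

/-- For the size process `X(t)` of the tree rooted at a non-looping vertex `r`
(`X(r) = 1`, and `X(t+1) = X(t)+1` with conditional probability `(2X(t)-1)/(2t+1)`,
else `X(t+1) = X(t)`), setting `Y(t) = X(t) - 1/2`, the process
`Y(t)(Y(t)+1)⋯(Y(t)+ℓ-1) / ∏_{j<ℓ} (2(t+j)+1)`, `t ≥ r`, is a martingale. -/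
theorem rising_factorial_martingale_shifted
    {Ω : Type*} {m0 : MeasurableSpace Ω} (μ : Measure Ω) [IsProbabilityMeasure μ]
    (ℱ : Filtration ℕ m0) (r : ℕ) (hr : 1 ≤ r) (X : ℕ → Ω → ℕ)
    (hadp : Adapted ℱ (fun t ω => (X t ω : ℝ)))
    (hinit : ∀ ω, X r ω = 1)
    (hstep : ∀ t, r ≤ t → ∀ᵐ ω ∂μ, X (t + 1) ω = X t ω + 1 ∨ X (t + 1) ω = X t ω)
    (htrans : ∀ t, r ≤ t →
      μ[Set.indicator {ω | X (t + 1) ω = X t ω + 1} (fun _ => (1 : ℝ)) | ℱ t]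
        =ᵐ[μ] fun ω => (2 * (X t ω : ℝ) - 1) / (2 * (t : ℝ) + 1))
    (ℓ : ℕ) (hℓ : 1 ≤ ℓ) :
    Martingale
      (fun s ω => (∏ j ∈ Finset.range ℓ, ((X (r + s) ω : ℝ) - 1 / 2 + j)) /
        ∏ j ∈ Finset.range ℓ, (2 * ((r : ℝ) + s + j) + 1))
      ⟨fun s => ℱ (r + s), fun _ _ hab => ℱ.mono (by omega), fun s => ℱ.le _⟩ μ := by
  -- a.e. bound on X
  have hXb : ∀ s : ℕ, ∀ᵐ ω ∂μ, X (r + s) ω ≤ s + 1 := by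
    intro s
    induction s with
    | zero =>
      filter_upwards with ω
      have : r + 0 = r := rfl
      rw [this, hinit ω]
    | succ n ih =>
      have he : r + (n + 1) = (r + n) + 1 := rfl
      filter_upwards [ih, hstep (r + n) (Nat.le_add_right r n)] with ω h1 h2
      rw [he]
      rcases h2 with h | h <;> omega
  have hXbr : ∀ s : ℕ, ∀ᵐ ω ∂μ, |(X (r + s) ω : ℝ)| ≤ (s : ℝ) + 1 := by
    intro s
    filter_upwards [hXb s] with ω h
    rw [abs_of_nonneg (Nat.cast_nonneg _)]
    exact_mod_cast h
  refine martingale_nat (fun s => ?_) (fun s => ?_) (fun s => ?_)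
  · -- adapted
    simp only [sub_eq_add_neg, div_eq_mul_inv]
    exact (sm_prod (hadp (r + s)).stronglyMeasurable ℓ (-(1 / 2))).mul stronglyMeasurable_const
  · -- integrable
    simp only [sub_eq_add_neg]
    exact (int_prod ((hadp (r + s)).stronglyMeasurable.mono (ℱ.le _)).aestronglyMeasurable (hXbr s) ℓ
      (by rw [abs_le]; norm_num)).div_const _
  · -- martingale property
    set t := r + s with hts
    have ht : r ≤ t := Nat.le_add_right r s
    have hte : r + (s + 1) = t + 1 := rfl
    set G : Ω → ℝ := fun ω => ∏ j ∈ Finset.range ℓ, ((X t ω : ℝ) + -(1 / 2) + (j : ℝ)) with hG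
    set H : Ω → ℝ := fun ω => ∏ j ∈ Finset.range ℓ, ((X t ω : ℝ) + (1 / 2) + (j : ℝ)) with hH
    set N : Ω → ℝ := fun ω => ∏ j ∈ Finset.range ℓ, ((X (t + 1) ω : ℝ) + -(1 / 2) + (j : ℝ))
      with hN
    set A : Set Ω := {ω | X (t + 1) ω = X t ω + 1} with hA
    set I : Ω → ℝ := A.indicator (fun _ => (1 : ℝ)) with hI
    have hAmeas : MeasurableSet A := by
      have h1 : Measurable fun ω => (X (t + 1) ω : ℝ) :=
        ((hadp (t + 1)).stronglyMeasurable.mono (ℱ.le _)).measurable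
      have h2 : Measurable fun ω => (X t ω : ℝ) + 1 :=
        (((hadp t).stronglyMeasurable.mono (ℱ.le _)).measurable).add_const 1
      have hAeq : A = {ω | (X (t + 1) ω : ℝ) = (X t ω : ℝ) + 1} := by
        ext ω
        simp only [hA, Set.mem_setOf_eq]
        constructor
        · intro h; rw [h]; push_cast; ring
        · intro h; exact_mod_cast h
      rw [hAeq]
      exact measurableSet_eq_fun h1 h2
    have hXb1 : ∀ᵐ ω ∂μ, |(X t ω : ℝ)| ≤ (s : ℝ) + 1 := hXbr s
    have hXb2 : ∀ᵐ ω ∂μ, |(X (t + 1) ω : ℝ)| ≤ ((s + 1 : ℕ) : ℝ) + 1 := hXbr (s + 1)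
    have hGint : Integrable G μ :=
      int_prod ((hadp t).stronglyMeasurable.mono (ℱ.le _)).aestronglyMeasurable hXb1 ℓ (by rw [abs_le]; norm_num)
    have hHint : Integrable H μ :=
      int_prod ((hadp t).stronglyMeasurable.mono (ℱ.le _)).aestronglyMeasurable hXb1 ℓ (by rw [abs_le]; norm_num)
    have hNint : Integrable N μ :=
      int_prod ((hadp (t + 1)).stronglyMeasurable.mono (ℱ.le _)).aestronglyMeasurable hXb2 ℓ (by rw [abs_le]; norm_num)
    have hIint : Integrable I μ := (integrable_const (1 : ℝ)).indicator hAmeas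
    have hIsm : StronglyMeasurable I := stronglyMeasurable_const.indicator hAmeas
    have hHGsm : StronglyMeasurable[ℱ t] (H - G) :=
      (sm_prod (hadp t).stronglyMeasurable ℓ (1 / 2)).sub (sm_prod (hadp t).stronglyMeasurable ℓ (-(1 / 2)))
    have hIbd : ∀ ω, |I ω| ≤ 1 := by
      intro ω
      by_cases h : ω ∈ A <;> simp [hI, Set.indicator, h]
    have hHGIint : Integrable ((H - G) * I) μ := by
      refine Integrable.mono' (hHint.sub hGint).abs
        (((hHGsm.mono (ℱ.le _)).aestronglyMeasurable).mul hIsm.aestronglyMeasurable) ?_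
      filter_upwards with ω
      rw [Pi.mul_apply, Real.norm_eq_abs, abs_mul]
      calc |(H - G) ω| * |I ω| ≤ |(H - G) ω| * 1 :=
            mul_le_mul_of_nonneg_left (hIbd ω) (abs_nonneg _)
        _ = |(H - G) ω| := mul_one _
    -- a.e. decomposition of N
    have hNdecomp : N =ᵐ[μ] (H - G) * I + G := by
      filter_upwards [hstep t ht] with ω hω
      rcases hω with h | h
      · have hmem : ω ∈ A := h
        have hIω : I ω = 1 := by rw [hI, Set.indicator_of_mem hmem]
        have hNω : N ω = H ω := by
          rw [hN, hH]
          refine Finset.prod_congr rfl fun j _ => ?_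
          rw [h]; push_cast; ring
        simp only [Pi.add_apply, Pi.mul_apply, Pi.sub_apply, hIω, hNω]
        ring
      · have hmem : ω ∉ A := by
          rw [hA, Set.mem_setOf_eq, h]
          omega
        have hIω : I ω = 0 := by rw [hI, Set.indicator_of_notMem hmem]
        have hNω : N ω = G ω := by
          rw [hN, hG]
          refine Finset.prod_congr rfl fun j _ => ?_
          rw [h]
        simp only [Pi.add_apply, Pi.mul_apply, Pi.sub_apply, hIω, hNω]
        ring
    have h2t : (2 * (t : ℝ) + 1) ≠ 0 := by positivity
    -- conditional expectation of N
    have hcond : μ[N | ℱ t] =ᵐ[μ]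
        fun ω => G ω * ((2 * (t : ℝ) + 2 * ℓ + 1) / (2 * (t : ℝ) + 1)) := by
      have h1 : μ[N | ℱ t] =ᵐ[μ] μ[(H - G) * I + G | ℱ t] := condExp_congr_ae hNdecomp
      have h2 : μ[(H - G) * I + G | ℱ t] =ᵐ[μ] μ[(H - G) * I | ℱ t] + μ[G | ℱ t] :=
        condExp_add hHGIint hGint _
      have h3 : μ[(H - G) * I | ℱ t] =ᵐ[μ] (H - G) * μ[I | ℱ t] :=
        condExp_mul_of_stronglyMeasurable_left hHGsm hHGIint hIint
      have h4eq : μ[G | ℱ t] = G :=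
        condExp_of_stronglyMeasurable (ℱ.le t) (sm_prod (hadp t).stronglyMeasurable ℓ (-(1 / 2))) hGint
      have h4 : μ[G | ℱ t] =ᵐ[μ] G := by rw [h4eq]
      have h5 : μ[I | ℱ t] =ᵐ[μ] fun ω => (2 * (X t ω : ℝ) - 1) / (2 * (t : ℝ) + 1) :=
        htrans t ht
      refine h1.trans (h2.trans ?_)
      have h6 : (H - G) * μ[I | ℱ t] =ᵐ[μ]
          fun ω => (H ω - G ω) * ((2 * (X t ω : ℝ) - 1) / (2 * (t : ℝ) + 1)) := by
        filter_upwards [h5] with ω hω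
        rw [Pi.mul_apply, Pi.sub_apply, hω]
      filter_upwards [h3, h4, h6] with ω hω3 hω4 hω6
      rw [Pi.add_apply, hω3, hω4, hω6]
      -- algebra
      have hkey := key_id ((X t ω : ℝ) + -(1 / 2)) 1 ℓ
      have eH : ∏ j ∈ Finset.range ℓ, ((X t ω : ℝ) + -(1 / 2) + 1 + 1 * (j : ℝ)) = H ω := by
        rw [hH]; exact Finset.prod_congr rfl fun j _ => by ring
      have eG : ∏ j ∈ Finset.range ℓ, ((X t ω : ℝ) + -(1 / 2) + 1 * (j : ℝ)) = G ω := by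
        rw [hG]; exact Finset.prod_congr rfl fun j _ => by ring
      rw [eH, eG] at hkey
      field_simp
      linear_combination 2 * hkey
    -- identify f (s+1) and conclude
    have hc'pos : (0 : ℝ) < ∏ j ∈ Finset.range ℓ, (2 * ((r : ℝ) + (↑(s + 1)) + j) + 1) :=
      Finset.prod_pos fun j _ => by positivity
    have hcpos : (0 : ℝ) < ∏ j ∈ Finset.range ℓ, (2 * ((r : ℝ) + s + j) + 1) :=
      Finset.prod_pos fun j _ => by positivity
    have hfs1 : (fun ω => (∏ j ∈ Finset.range ℓ, ((X (r + (s + 1)) ω : ℝ) - 1 / 2 + j)) /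
        ∏ j ∈ Finset.range ℓ, (2 * ((r : ℝ) + (↑(s + 1)) + j) + 1)) =
        (∏ j ∈ Finset.range ℓ, (2 * ((r : ℝ) + (↑(s + 1)) + j) + 1))⁻¹ • N := by
      funext ω
      have hnum : (∏ j ∈ Finset.range ℓ, ((X (r + (s + 1)) ω : ℝ) - 1 / 2 + (j : ℝ))) = N ω := by
        rw [hN]
        exact Finset.prod_congr rfl fun j _ => by rw [hte]; ring
      rw [Pi.smul_apply, smul_eq_mul, div_eq_inv_mul, hnum]
    have hsmul := condExp_smul (m := ℱ t) (μ := μ)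
      ((∏ j ∈ Finset.range ℓ, (2 * ((r : ℝ) + (↑(s + 1)) + j) + 1))⁻¹) N
    have hfinal : μ[(fun ω => (∏ j ∈ Finset.range ℓ, ((X (r + (s + 1)) ω : ℝ) - 1 / 2 + j)) /
        ∏ j ∈ Finset.range ℓ, (2 * ((r : ℝ) + (↑(s + 1)) + j) + 1)) | ℱ t] =ᵐ[μ]
        fun ω => (∏ j ∈ Finset.range ℓ, ((X t ω : ℝ) - 1 / 2 + j)) /
          ∏ j ∈ Finset.range ℓ, (2 * ((r : ℝ) + s + j) + 1) := by
      rw [hfs1]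
      refine hsmul.trans ?_
      filter_upwards [hcond] with ω hω
      rw [Pi.smul_apply, smul_eq_mul, hω]
      -- deterministic identity
      have hkey := key_id (2 * (t : ℝ) + 1) 2 ℓ
      have ec' : ∏ j ∈ Finset.range ℓ, (2 * (t : ℝ) + 1 + 2 + 2 * (j : ℝ)) =
          ∏ j ∈ Finset.range ℓ, (2 * ((r : ℝ) + (↑(s + 1)) + j) + 1) :=
        Finset.prod_congr rfl fun j _ => by rw [hts]; push_cast; ring
      have ec : ∏ j ∈ Finset.range ℓ, (2 * (t : ℝ) + 1 + 2 * (j : ℝ)) =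
          ∏ j ∈ Finset.range ℓ, (2 * ((r : ℝ) + s + j) + 1) :=
        Finset.prod_congr rfl fun j _ => by rw [hts]; push_cast; ring
      rw [ec', ec] at hkey
      have eG : G ω = ∏ j ∈ Finset.range ℓ, ((X t ω : ℝ) - 1 / 2 + (j : ℝ)) := by
        rw [hG]; exact Finset.prod_congr rfl fun j _ => by ring
      rw [eG]
      set P := ∏ j ∈ Finset.range ℓ, ((X t ω : ℝ) - 1 / 2 + (j : ℝ)) with hP
      set c1 := ∏ j ∈ Finset.range ℓ, (2 * ((r : ℝ) + s + j) + 1) with hc1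
      set c2 := ∏ j ∈ Finset.range ℓ, (2 * ((r : ℝ) + (↑(s + 1)) + j) + 1) with hc2
      have hc1' : c1 ≠ 0 := ne_of_gt hcpos
      have hc2' : c2 ≠ 0 := ne_of_gt hc'pos
      field_simp
      linear_combination -(P * hkey)
    exact hfinal.symm
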